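/- arXiv:2407.08537 — 3 statements merged into one kernel-verified Lean document; each statement's English description precedes it below -/
import Mathlib

section
/- Let N, S, R_A, α_A > 0 with α_A < 1. Set α_B = 0, ε_m = 0, W^v = 0 and W^a = α_A·N/S. Then the bribery-fee threshold equals −4N·R_A·α_A / (S + N·(1 + α_A)), which is strictly negative; consequently, for every positive bribery fee ε_v > 0, the utility of accepting the bribe exceeds that of not accepting it: ((S·(1 + α_A·N/S) + N) / (2N·(1 − α_A)))·(R_A + ε_v) > ((S·(1 − α_A·N/S) + N·(1 − 2α_A)) / (2N·(1 − α_A)))·R_A. -/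
/-- With `α_B = 0`, `ε_m = 0`, `W^v = 0`, `W^a = α_A·N/S`, the
bribery-fee threshold equals `−4N·R_A·α_A/(S + N·(1 + α_A))`, which is negative;
hence any positive bribery fee makes accepting the bribe strictly preferable. -/
theorem negligible_fee_suffices (N S RA αA : ℝ)
    (hN : 0 < N) (hS : 0 < S) (hRA : 0 < RA) (hαA0 : 0 < αA) (hαA1 : αA < 1) :
    (2 * S * RA * (0 - αA * N / S) - 2 * N * RA * αA) /
        (S * (1 - 0 + αA * N / S) + N) =
      -(4 * N * RA * αA) / (S + N * (1 + αA)) ∧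
    -(4 * N * RA * αA) / (S + N * (1 + αA)) < 0 ∧
    ∀ εv : ℝ, 0 < εv →
      ((S * (1 + αA * N / S) + N) / (2 * N * (1 - αA))) * (RA + εv) >
        ((S * (1 - αA * N / S) + N * (1 - 2 * αA)) / (2 * N * (1 - αA))) * RA := by
  have hden : 0 < S + N * (1 + αA) := by nlinarith
  have hden2 : S * (1 - 0 + αA * N / S) + N ≠ 0 := by
    have : 0 < S * (1 - 0 + αA * N / S) + N := by
      have : 0 < αA * N / S := by positivity
      nlinarith
    linarith
  refine ⟨?_, ?_, ?_⟩
  · field_simp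
    ring
  · apply div_neg_of_neg_of_pos
    · nlinarith [mul_pos (mul_pos hN hRA) hαA0]
    · exact hden
  · intro εv hεv
    have h1 : 0 < 2 * N * (1 - αA) := by nlinarith
    rw [gt_iff_lt, div_mul_eq_mul_div, div_mul_eq_mul_div, div_lt_div_iff₀ h1 h1]
    apply mul_lt_mul_of_pos_right _ h1
    have ht : 0 < αA * N / S := by positivity
    set t := αA * N / S with htdef
    nlinarith [mul_pos (mul_pos hS hRA) ht, mul_pos (mul_pos hS hεv) ht,
      mul_pos (mul_pos hαA0 hN) hRA, mul_pos hS hεv, mul_pos hN hεv]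
end

section
/- Let Q, Q' > 0 and 0 ≤ f < 1 be real numbers with Q'·(1 − f) > Q. Define the arbitrage profit function P(Δ) = Q'·(1 − f)·Δ / (Q + (1 − f)·Δ) − Δ for Δ ≥ 0, and set Δ* = (√(Q·Q'·(1 − f)) − Q) / (1 − f). Then Δ* > 0 and for every Δ ≥ 0, P(Δ) ≤ P(Δ*), with equality only when Δ = Δ*. -/
/-- For a constant product AMM virtual pool with an arbitrage
opportunity (`Q'·(1 − f) > Q`), the trading amount
`Δ* = (√(Q·Q'·(1 − f)) − Q)/(1 − f)` is positive and uniquely maximizes the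
arbitrage profit `P(Δ) = Q'·(1 − f)·Δ/(Q + (1 − f)·Δ) − Δ` over `Δ ≥ 0`. -/
theorem optimal_trading_amount (Q Q' f : ℝ)
    (hQ : 0 < Q) (hQ' : 0 < Q') (hf0 : 0 ≤ f) (hf1 : f < 1)
    (harb : Q < Q' * (1 - f))
    (P : ℝ → ℝ) (hP : ∀ Δ, P Δ = Q' * (1 - f) * Δ / (Q + (1 - f) * Δ) - Δ)
    (Δstar : ℝ) (hΔ : Δstar = (Real.sqrt (Q * Q' * (1 - f)) - Q) / (1 - f)) :
    0 < Δstar ∧ ∀ Δ, 0 ≤ Δ → P Δ ≤ P Δstar ∧ (P Δ = P Δstar → Δ = Δstar) := by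
  have hg : 0 < 1 - f := by linarith
  set s := Real.sqrt (Q * Q' * (1 - f)) with hsdef
  have hs2 : s ^ 2 = Q * Q' * (1 - f) := by
    rw [hsdef, Real.sq_sqrt]; positivity
  have hsnn : 0 ≤ s := Real.sqrt_nonneg _
  have hQs : Q < s := by nlinarith
  have hs0 : 0 < s := lt_trans hQ hQs
  have hΔpos : 0 < Δstar := by
    rw [hΔ]; exact div_pos (by linarith) hg
  have hstar : Q + (1 - f) * Δstar = s := by
    rw [hΔ]; field_simp; ring
  have hQ'eq : Q' = s ^ 2 / (Q * (1 - f)) := by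
    rw [hs2]; field_simp
  refine ⟨hΔpos, fun Δ hΔ0 => ?_⟩
  have hu : 0 < Q + (1 - f) * Δ := by nlinarith
  have key : P Δstar - P Δ = (Q + (1 - f) * Δ - s) ^ 2 / ((1 - f) * (Q + (1 - f) * Δ)) := by
    rw [hP, hP, hstar, hΔ, hQ'eq]
    field_simp
    ring
  have hden : 0 < (1 - f) * (Q + (1 - f) * Δ) := mul_pos hg hu
  constructor
  · nlinarith [div_nonneg (sq_nonneg (Q + (1 - f) * Δ - s)) hden.le]
  · intro hPe
    have h0 : (Q + (1 - f) * Δ - s) ^ 2 / ((1 - f) * (Q + (1 - f) * Δ)) = 0 := by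
      rw [← key, hPe]; ring
    rcases div_eq_zero_iff.mp h0 with h | h
    · have h3 : Q + (1 - f) * Δ - s = 0 := by
        exact pow_eq_zero_iff two_ne_zero |>.mp h
      have : (1 - f) * Δ = (1 - f) * Δstar := by rw [← hstar] at h3; linarith
      exact mul_left_cancel₀ (by linarith) this
    · exact absurd h hden.ne'
end

section
/- Let a, b, c, d > 0 and 0 ≤ f < 1 be real numbers, and define the swap output functions g(x) = b·(1 − f)·x / (a + (1 − f)·x) and h(y) = d·(1 − f)·y / (c + (1 − f)·y). Then for every x ≥ 0, h(g(x)) = D·(1 − f)·x / (C + (1 − f)·x), where C = a·c / (c + b·(1 − f)) and D = (1 − f)·b·d / (c + b·(1 − f)). -/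
/-- Composing two constant product AMM swap functions along a
trading path yields a single virtual constant product pool with reserves
`C = a·c/(c + b·(1 − f))` and `D = (1 − f)·b·d/(c + b·(1 − f))`. -/
theorem virtual_pool_composition (a b c d f : ℝ)
    (ha : 0 < a) (hb : 0 < b) (hc : 0 < c) (hd : 0 < d)
    (hf0 : 0 ≤ f) (hf1 : f < 1)
    (g h : ℝ → ℝ)
    (hg : ∀ x, g x = b * (1 - f) * x / (a + (1 - f) * x))
    (hh : ∀ y, h y = d * (1 - f) * y / (c + (1 - f) * y))
    (C D : ℝ)
    (hC : C = a * c / (c + b * (1 - f)))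
    (hD : D = (1 - f) * b * d / (c + b * (1 - f))) :
    ∀ x, 0 ≤ x → h (g x) = D * (1 - f) * x / (C + (1 - f) * x) := by
  intro x hx
  have hf : (0:ℝ) < 1 - f := by linarith
  have h1 : (0:ℝ) < a + (1 - f) * x := by positivity
  have hgx : c + (1 - f) * g x = (c * (a + (1-f)*x) + (1-f) * (b * (1-f) * x)) / (a + (1-f)*x) := by
    rw [hg]; field_simp
  have h2 : (0:ℝ) < c * (a + (1-f)*x) + (1-f) * (b * (1-f) * x) := by positivity
  have h3 : (0:ℝ) < c + b * (1 - f) := by positivity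
  have h4 : (0:ℝ) < C + (1 - f) * x := by
    rw [hC]; positivity
  have h5 : (0:ℝ) < c + (1 - f) * g x := by rw [hgx]; positivity
  rw [hg] at h5
  rw [hh, hg, hC, hD]
  field_simp
  ring
end
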